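/- Let ε > 0, λ > 0 and suppose z ∈ ℂ satisfies z(λ - ε²π²(z-1)|z-1|²) = (z-1)|z-1|². Then z is real, and z is a root of the real quartic polynomial (1 + ε²π² z)(z-1)³ = λ z. -/

import Mathlib

theorem finite_temperature_equation_real (eps lam : ℝ) (heps : 0 < eps) (hlam : 0 < lam)
    (z : ℂ)
    (hz : z * ((lam : ℂ) - (eps : ℂ) ^ 2 * (Real.pi : ℂ) ^ 2 * (z - 1) *
        ((‖z - 1‖ : ℝ) : ℂ) ^ 2) =
      (z - 1) * ((‖z - 1‖ : ℝ) : ℂ) ^ 2) :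
    z.im = 0 ∧
      (1 + (eps : ℂ) ^ 2 * (Real.pi : ℂ) ^ 2 * z) * (z - 1) ^ 3 = (lam : ℂ) * z := by
  have hpi : (0:ℝ) < Real.pi := Real.pi_pos
  have habs : ((‖z - 1‖ : ℝ) : ℂ) ^ 2 = ((‖z - 1‖ ^ 2 : ℝ) : ℂ) := by
    push_cast; ring
  rw [habs] at hz
  set A : ℝ := eps ^ 2 * Real.pi ^ 2 with hA
  have hApos : 0 < A := by positivity
  set r : ℝ := ‖z - 1‖ ^ 2 with hr
  have hz1 : z ≠ 1 := by
    rintro rfl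
    simp at hz
    exact absurd hz (by exact_mod_cast hlam.ne')
  have hrpos : 0 < r := by
    have h0 : ‖z - 1‖ ≠ 0 := by
      simp [sub_eq_zero, hz1]
    rw [hr]; positivity
  have hquad : ((A * r : ℝ) : ℂ) * z ^ 2 + (((1 - A) * r - lam : ℝ) : ℂ) * z - ((r : ℝ) : ℂ) = 0 := by
    rw [hA]
    push_cast
    linear_combination -hz
  have him : z.im = 0 := by
    have hIm := congrArg Complex.im hquad
    have hRe := congrArg Complex.re hquad
    simp [Complex.add_im, Complex.add_re, Complex.sub_im, Complex.sub_re, Complex.mul_im,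
      Complex.mul_re, pow_two, Complex.ofReal_im, Complex.ofReal_re] at hIm hRe
    by_contra hy
    have h2 : z.im * (2 * (A * r) * z.re + ((1 - A) * r - lam)) = 0 := by
      linear_combination hIm
    have hx : 2 * (A * r) * z.re + ((1 - A) * r - lam) = 0 :=
      (mul_eq_zero.mp h2).resolve_left hy
    have key : (A * r) * (z.re ^ 2 + z.im ^ 2) + r = 0 := by
      linear_combination z.re * hx - hRe
    nlinarith [mul_nonneg (mul_pos hApos hrpos).le
      (by positivity : (0:ℝ) ≤ z.re ^ 2 + z.im ^ 2)]
  refine ⟨him, ?_⟩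
  have hconj : (starRingEnd ℂ) (z - 1) = z - 1 := by
    rw [Complex.conj_eq_iff_im]
    simp [him]
  have hrc : ((r : ℝ) : ℂ) = (z - 1) ^ 2 := by
    calc ((r : ℝ) : ℂ) = ((Complex.normSq (z - 1) : ℝ) : ℂ) := by rw [hr, Complex.sq_norm]
      _ = (z - 1) * (starRingEnd ℂ) (z - 1) := (Complex.mul_conj _).symm
      _ = (z - 1) ^ 2 := by rw [hconj]; ring
  linear_combination -hz - (1 + (eps : ℂ) ^ 2 * (Real.pi : ℂ) ^ 2 * z) * (z - 1) * hrc
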